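/- For all integers N ≥ 1 and s ≥ 0 and all nonzero complex z, the identity (1/(2^s s!)) · U_{N+s-1}^{(s)}((z^{1/2} + z^{-1/2})/2) = z^{-(N-1)/2} · ∑_{j=0}^{N-1} C(N+s-1-j, s) · C(s+j, j) · z^j holds, where z^{1/2} denotes a fixed square root of z. -/

import Mathlib

open Polynomial Polynomial.Chebyshev Finset

lemma iter_deriv_two_X_mul (s : ℕ) (p : ℂ[X]) :
    derivative^[s+1] (2*X*p) =
      2*X*(derivative^[s+1] p) + ((2*s+2 : ℕ) : ℂ[X]) * derivative^[s] p := by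
  induction s generalizing p with
  | zero =>
      simp only [Function.iterate_one, Function.iterate_zero, id_eq, derivative_mul]
      push_cast
      simp [derivative_mul]
      ring
  | succ s ih =>
      rw [Function.iterate_succ_apply, Function.iterate_succ_apply derivative (s+1) p]
      have h1 : derivative (2*X*p) = 2*X*(derivative p) + (2:ℂ[X]) * p := by
        simp [derivative_mul]; ring
      rw [h1, iterate_map_add, ih (derivative p),
        show ((2:ℂ[X])*p) = C 2 * p by rw [map_ofNat], iterate_derivative_C_mul, map_ofNat]
      rw [← Function.iterate_succ_apply derivative s p]
      push_cast
      ring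

lemma U_deg_coeff : ∀ n : ℕ, (U ℂ (n:ℤ)).natDegree ≤ n ∧ (U ℂ (n:ℤ)).coeff n = 2^n := by
  intro n
  induction n using Nat.strong_induction_on with
  | _ n ih =>
    match n with
    | 0 => simp [U_zero]
    | 1 =>
        constructor
        · simp only [Nat.cast_one, U_one]
          apply le_trans (natDegree_mul_le)
          simp
        · simp [U_one, coeff_ofNat_mul]
    | (m+2) =>
        have h1 := ih (m+1) (by omega)
        have h0 := ih m (by omega)
        have hrec : U ℂ (((m+2:ℕ)):ℤ) = 2*X*U ℂ ((m:ℤ)+1) - U ℂ (m:ℤ) := by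
          have := U_add_two ℂ (m:ℤ)
          push_cast
          convert this using 3 <;> push_cast <;> ring
        have hc1 : ((m+1:ℕ):ℤ) = (m:ℤ)+1 := by push_cast; ring
        rw [hrec]
        constructor
        · apply le_trans (natDegree_sub_le _ _)
          apply max_le
          · apply le_trans (natDegree_mul_le)
            have : (2*X : ℂ[X]).natDegree ≤ 1 := by
              apply le_trans (natDegree_mul_le); simp
            have h1' := h1.1
            rw [hc1] at h1'
            omega
          · omega
        · rw [coeff_sub, coeff_eq_zero_of_natDegree_lt (by omega : (U ℂ (m:ℤ)).natDegree < m+2)]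
          rw [mul_assoc, coeff_ofNat_mul, coeff_X_mul]
          have h1' := h1.2
          rw [hc1] at h1'
          rw [h1']
          push_cast
          ring

noncomputable def SS (z : ℂ) (N s : ℕ) : ℂ :=
  ∑ j ∈ Finset.range N, ((N + s - 1 - j).choose s : ℂ) * ((s + j).choose j : ℂ) * z ^ j

lemma SS_ext (z : ℂ) (M s : ℕ) :
    SS z M (s+1) = ∑ j ∈ Finset.range (M+1),
      ((M + (s+1) - 1 - j).choose (s+1) : ℂ) * (((s+1) + j).choose j : ℂ) * z ^ j := by
  rw [Finset.sum_range_succ]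
  have : (M + (s+1) - 1 - M) = s := by omega
  rw [this, Nat.choose_eq_zero_of_lt (Nat.lt_succ_self s)]
  simp [SS]

lemma hA (z : ℂ) (s M : ℕ) :
    SS z (M+1) (s+1) - SS z M (s+1) =
      ∑ j ∈ Finset.range (M+1), ((M + s - j).choose s : ℂ) * (((s+1) + j).choose j : ℂ) * z ^ j := by
  rw [SS_ext z M s, SS]
  rw [← Finset.sum_sub_distrib]
  apply Finset.sum_congr rfl
  intro j hj
  rw [Finset.mem_range] at hj
  have e1 : (M + 1 + (s+1) - 1 - j) = (M + s - j) + 1 := by omega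
  have e2 : (M + (s+1) - 1 - j) = (M + s - j) := by omega
  rw [e1, e2, Nat.choose_succ_succ]
  push_cast
  ring

lemma hB (z : ℂ) (s m : ℕ) :
    SS z (m+2) (s+1) - SS z (m+1) (s+1) - SS z (m+2) s =
      ∑ j ∈ Finset.range (m+2),
        ((m + s + 1 - j).choose s : ℂ) * ((s + j).choose (s+1) : ℂ) * z ^ j := by
  rw [SS_ext z (m+1) s, SS, SS]
  rw [← Finset.sum_sub_distrib, ← Finset.sum_sub_distrib]
  apply Finset.sum_congr rfl
  intro j hj
  rw [Finset.mem_range] at hj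
  have e1 : (m + 2 + (s+1) - 1 - j) = (m + s + 1 - j) + 1 := by omega
  have e2 : (m + 1 + (s+1) - 1 - j) = (m + s + 1 - j) := by omega
  have e3 : (m + 2 + s - 1 - j) = (m + s + 1 - j) := by omega
  rw [e1, e2, e3, Nat.choose_succ_succ]
  have e4 : ((s+1) + j).choose j = (s + j).choose j + (s + j).choose (s+1) := by
    rw [Nat.choose_symm_of_eq_add (show (s+1)+j = j + (s+1) by omega),
      show (s+1)+j = (s+j)+1 by omega, Nat.choose_succ_succ,
      Nat.choose_symm_add]
  rw [e4]
  push_cast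
  ring

lemma comb (z : ℂ) (s m : ℕ) :
    SS z (m+2) (s+1) = (z+1) * SS z (m+1) (s+1) + SS z (m+2) s - z * SS z m (s+1) := by
  have hb := hB z s m
  have ha := hA z s m
  have hshift : (∑ j ∈ Finset.range (m+2),
        ((m + s + 1 - j).choose s : ℂ) * ((s + j).choose (s+1) : ℂ) * z ^ j)
      = z * ∑ j ∈ Finset.range (m+1),
        ((m + s - j).choose s : ℂ) * (((s+1) + j).choose j : ℂ) * z ^ j := by
    rw [Finset.sum_range_succ' _ (m+1)]
    simp only [Nat.choose_eq_zero_of_lt (Nat.lt_succ_self s), pow_zero, Nat.cast_zero,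
      mul_zero, zero_mul, mul_one, add_zero]
    rw [Finset.mul_sum]
    apply Finset.sum_congr rfl
    intro j hj
    rw [Finset.mem_range] at hj
    have e1 : (m + s + 1 - (j+1)) = m + s - j := by omega
    have e2 : (s + (j+1)).choose (s+1) = ((s+1)+j).choose j := by
      rw [show s + (j+1) = (s+1)+j by omega]
      exact Nat.choose_symm_of_eq_add (show (s+1)+j = (s+1) + j by rfl)
    rw [e1, e2]
    ring
  rw [hshift, ← ha] at hb
  linear_combination hb

lemma geom (z : ℂ) (m : ℕ) : SS z (m+2) 0 = (z+1) * SS z (m+1) 0 - z * SS z m 0 := by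
  have hS : ∀ N : ℕ, SS z N 0 = ∑ j ∈ Finset.range N, z ^ j := by
    intro N; apply Finset.sum_congr rfl; intro j hj; simp
  rw [hS, hS, hS]
  have h1 := Finset.sum_range_succ (fun j => z^j) (m+1)
  have h2 := Finset.sum_range_succ (fun j => z^j) m
  rw [h1, h2]
  ring

lemma iter_deriv_U_self (n : ℕ) :
    derivative^[n] (U ℂ (n:ℤ)) = C ((2^n * n.factorial : ℕ) : ℂ) := by
  have hd := (U_deg_coeff n).1
  have hc := (U_deg_coeff n).2
  have h0 : (derivative^[n] (U ℂ (n:ℤ))).natDegree = 0 :=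
    le_antisymm (le_trans (natDegree_iterate_derivative _ _) (by omega)) (Nat.zero_le _)
  rw [eq_C_of_natDegree_le_zero (le_of_eq h0), coeff_iterate_derivative]
  congr 1
  rw [zero_add, hc]
  simp [Nat.descFactorial_self, nsmul_eq_mul]
  push_cast
  ring

lemma iter_deriv_U_zero (s : ℕ) : derivative^[s+1] (U ℂ (s:ℤ)) = 0 :=
  iterate_derivative_eq_zero (lt_of_le_of_lt (U_deg_coeff s).1 (Nat.lt_succ_self s))

lemma key (w : ℂ) (hw0 : w ≠ 0) (s : ℕ) : ∀ N : ℕ,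
    w^N * (derivative^[s] (U ℂ ((N:ℤ) + (s:ℤ) - 1))).eval ((w + w⁻¹)/2) =
      2^s * (s.factorial : ℂ) * w * SS (w^2) N s := by
  have hinv : w * w⁻¹ = 1 := mul_inv_cancel₀ hw0
  induction s with
  | zero =>
      intro N
      induction N using Nat.strong_induction_on with
      | _ N ih =>
        match N with
        | 0 =>
            have hidx : ((0:ℕ):ℤ) + ((0:ℕ):ℤ) - 1 = -1 := by norm_num
            rw [hidx, U_neg_one]
            simp [SS]
        | 1 =>
            have hidx : ((1:ℕ):ℤ) + ((0:ℕ):ℤ) - 1 = 0 := by norm_num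
            rw [hidx, U_zero]
            simp [SS, Nat.factorial]
        | (m+2) =>
            have e1 := ih (m+1) (by omega)
            have e0 := ih m (by omega)
            have hidx : ((m+2:ℕ):ℤ) + ((0:ℕ):ℤ) - 1 = ((m:ℤ) - 1) + 2 := by push_cast; ring
            have hidx1 : ((m+1:ℕ):ℤ) + ((0:ℕ):ℤ) - 1 = ((m:ℤ) - 1) + 1 := by push_cast; ring
            have hidx0 : ((m:ℕ):ℤ) + ((0:ℕ):ℤ) - 1 = (m:ℤ) - 1 := by push_cast; ring
            rw [hidx, U_add_two]
            rw [hidx1] at e1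
            rw [hidx0] at e0
            simp only [Function.iterate_zero, id_eq] at *
            rw [eval_sub, eval_mul, eval_mul, eval_ofNat, eval_X]
            have hg := geom (w^2) m
            set A := (U ℂ ((m:ℤ) - 1 + 1)).eval ((w + w⁻¹)/2)
            set B := (U ℂ ((m:ℤ) - 1)).eval ((w + w⁻¹)/2)
            simp only [Nat.factorial_zero, Nat.cast_one, pow_zero] at *
            linear_combination (w^2 + w*w⁻¹)*e1 + (w*SS (w^2) (m+1) 0)*hinv - w^2*e0 - w*hg
  | succ s ihs =>
      intro N
      induction N using Nat.strong_induction_on with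
      | _ N ih =>
        match N with
        | 0 =>
            have hidx : ((0:ℕ):ℤ) + ((s+1:ℕ):ℤ) - 1 = (s:ℤ) := by push_cast; ring
            rw [hidx, iter_deriv_U_zero]
            simp [SS]
        | 1 =>
            have hidx : ((1:ℕ):ℤ) + ((s+1:ℕ):ℤ) - 1 = ((s+1:ℕ):ℤ) := by push_cast; ring
            rw [hidx, iter_deriv_U_self]
            simp only [eval_C]
            have : SS (w^2) 1 (s+1) = 1 := by
              simp [SS]
            rw [this]
            push_cast
            ring
        | (m+2) =>
            have e1 := ih (m+1) (by omega)
            have e0 := ih m (by omega)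
            have emid := ihs (m+2)
            have hidx : ((m+2:ℕ):ℤ) + ((s+1:ℕ):ℤ) - 1 = ((m:ℤ) + (s:ℤ)) + 2 := by push_cast; ring
            have hidx1 : ((m+1:ℕ):ℤ) + ((s+1:ℕ):ℤ) - 1 = ((m:ℤ) + (s:ℤ)) + 1 := by push_cast; ring
            have hidx0 : ((m:ℕ):ℤ) + ((s+1:ℕ):ℤ) - 1 = (m:ℤ) + (s:ℤ) := by push_cast; ring
            have hidxm : ((m+2:ℕ):ℤ) + ((s:ℕ):ℤ) - 1 = ((m:ℤ) + (s:ℤ)) + 1 := by push_cast; ring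
            rw [hidx, U_add_two, iterate_map_sub, iter_deriv_two_X_mul]
            rw [hidx1] at e1
            rw [hidx0] at e0
            rw [hidxm] at emid
            rw [eval_sub, eval_add, eval_mul, eval_mul, eval_mul, eval_ofNat, eval_X, eval_natCast]
            have hc := comb (w^2) s m
            have hf : ((s+1).factorial : ℂ) = (s+1) * (s.factorial : ℂ) := by
              rw [Nat.factorial_succ]; push_cast; ring
            set E1 := (derivative^[s+1] (U ℂ ((m:ℤ) + (s:ℤ) + 1))).eval ((w + w⁻¹)/2)
            set Emid := (derivative^[s] (U ℂ ((m:ℤ) + (s:ℤ) + 1))).eval ((w + w⁻¹)/2)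
            set E0 := (derivative^[s+1] (U ℂ ((m:ℤ) + (s:ℤ)))).eval ((w + w⁻¹)/2)
            push_cast
            linear_combination (w^2 + w*w⁻¹)*e1 +
              (2^(s+1) * ((s+1).factorial : ℂ)*w*SS (w^2) (m+1) (s+1))*hinv - w^2*e0 +
              (2*s+2)*emid - (2^(s+1) * ((s+1).factorial : ℂ)*w)*hc -
              (2^(s+1)*w*SS (w^2) (m+2) s)*hf

theorem stmt18 (N s : ℕ) (hN : 1 ≤ N) (z w : ℂ) (hz : z ≠ 0) (hw : w ^ 2 = z) :
    (1 / (2 ^ s * s.factorial : ℂ)) *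
        (Polynomial.derivative^[s] (Polynomial.Chebyshev.U ℂ (N + s - 1))).eval
          ((w + w⁻¹) / 2) =
      w ^ (-((N : ℤ) - 1)) *
        ∑ j ∈ Finset.range N,
          ((N + s - 1 - j).choose s : ℂ) * ((s + j).choose j : ℂ) * z ^ j := by
  subst hw
  have hw0 : w ≠ 0 := by
    intro h
    exact hz (by simp [h])
  have k := key w hw0 s N
  rw [SS] at k
  have hzp : w ^ (-((N:ℤ)-1)) = w * ((w^N : ℂ))⁻¹ := by
    rw [show -((N:ℤ)-1) = 1 + (-(N:ℤ)) by ring, zpow_add₀ hw0, zpow_one, zpow_neg, zpow_natCast]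
  rw [hzp]
  have h2 : (2:ℂ)^s ≠ 0 := pow_ne_zero _ two_ne_zero
  have hfa : ((s.factorial:ℕ):ℂ) ≠ 0 := Nat.cast_ne_zero.mpr (Nat.factorial_ne_zero s)
  have hwN : w^N ≠ 0 := pow_ne_zero _ hw0
  set E := (Polynomial.derivative^[s] (Polynomial.Chebyshev.U ℂ ((N:ℤ) + (s:ℤ) - 1))).eval
    ((w + w⁻¹) / 2) with hE
  field_simp
  linear_combination k
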